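/- Let C be a genus 2 curve and K^{1/2} an even theta characteristic. If E = L ⊕ L^{-1} with deg L = 0 and L² ⊗ K^{1/2} ≅ O(x) for a point x ∈ C, then End₀E ⊗ K^{1/2} ≅ O(x) ⊕ K^{1/2} ⊕ O(σ(x)) and dim H^0(C, End₀E ⊗ K^{1/2}) = 2, where σ is the hyperelliptic involution. -/
import Mathlib


/-- Abstract data of a smooth projective curve over ℂ: its Picard group
(line bundles under tensor product, written additively), genus, canonical
bundle, degree and `dim H⁰` functions, with Riemann–Roch (in the form
incorporating Serre duality `h¹(L) = h⁰(K−L)`) and basic vanishing. -/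
structure CurveData where
  Pic : Type
  [instPic : AddCommGroup Pic]
  genus : ℕ
  K : Pic
  deg : Pic → ℤ
  h0 : Pic → ℕ
  deg_add : ∀ a b : Pic, deg (a + b) = deg a + deg b
  deg_K : deg K = 2 * (genus : ℤ) - 2
  h0_zero : h0 0 = 1
  h0_neg : ∀ L, deg L < 0 → h0 L = 0
  riemannRoch : ∀ L, (h0 L : ℤ) - (h0 (K - L) : ℤ) = deg L + 1 - (genus : ℤ)

attribute [instance] CurveData.instPic

/-- Let `C` be a genus-2 curve, `θ = K^{1/2}` an even theta
characteristic (so `h⁰(θ) = 0`; here `Even (h⁰ θ)` together with `h⁰ θ ≤ 1`, as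
`θ` has degree 1 on the hyperelliptic `C`).  If `E = L ⊕ L⁻¹` with `deg L = 0`
and `L² ⊗ K^{1/2} ≅ O(x)` for a point `x ∈ C` (with class `P = O(x)`,
`deg P = 1`, `h⁰(P) = 1`), then
`End₀E ⊗ K^{1/2} ≅ O(x) ⊕ K^{1/2} ⊕ O(σ(x))` — in the Picard group
`L² + θ = P`, the middle summand is `θ`, and `−L² + θ = K − P = O(σ(x))` —
and `dim H⁰(C, End₀E ⊗ K^{1/2}) = h⁰(P) + h⁰(θ) + h⁰(K−P) = 2`. -/
theorem genus2_semistable_even_theta_h0 (D : CurveData) (hg : D.genus = 2)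
    (θ : D.Pic) (hθ : θ + θ = D.K)
    (hθeven : Even (D.h0 θ)) (hθle : D.h0 θ ≤ 1) (hθdeg : D.deg θ = 1)
    (L P : D.Pic) (hL : D.deg L = 0)
    (hP : L + L + θ = P) (hPdeg : D.deg P = 1) (hPh0 : D.h0 P = 1) :
    (-(L + L) + θ = D.K - P) ∧
    D.h0 (D.K - P) = 1 ∧
    D.h0 (L + L + θ) + D.h0 θ + D.h0 (-(L + L) + θ) = 2 := by
  have h1 : -(L + L) + θ = D.K - P := by rw [← hP, ← hθ]; abel
  have hθ0 : D.h0 θ = 0 := by rcases hθeven with ⟨k, hk⟩; omega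
  have hdeg0 : D.deg 0 = 0 := by
    have := D.deg_add 0 0; simp at this; omega
  have hdegKP : D.deg (D.K - P) = 1 := by
    have h2 : D.deg (P + (D.K - P)) = D.deg P + D.deg (D.K - P) := D.deg_add _ _
    simp at h2
    have hK : D.deg D.K = 2 := by rw [D.deg_K, hg]; norm_num
    omega
  have hRR := D.riemannRoch (D.K - P)
  have hKK : D.K - (D.K - P) = P := by abel
  rw [hKK, hg, hdegKP, hPh0] at hRR
  have h2 : D.h0 (D.K - P) = 1 := by omega
  exact ⟨h1, h2, by rw [hP, h1, hθ0, hPh0, h2]⟩
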